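/- arXiv:1110.6255 — 5 statements merged into one kernel-verified Lean document; each statement's English description precedes it below -/
import Mathlib

section
/- The probability that the number measurement on a quantum Gaussian state ρ_{θ,N} yields outcome k is P_{θ,N}(k) = (1/(N+1)) (N/(N+1))^k e^{-|θ|²/(N+1)} L_k(-|θ|²/(N(N+1))), where L_k is the k-th Laguerre polynomial. Equivalently (as a Gaussian-mixture integral identity): (1/(π k! N)) ∫_{ℂ} |ξ|^{2k} e^{-|ξ|²} e^{-|θ-ξ|²/N} dξ equals the right-hand side above, for all θ ∈ ℂ, N > 0, k ∈ ℕ. -/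
open MeasureTheory Real

/-- The k-th Laguerre polynomial. -/
noncomputable def laguerre (k : ℕ) (x : ℝ) : ℝ :=
  ∑ j ∈ Finset.range (k + 1), (k.choose j : ℝ) * (-x) ^ j / (j.factorial : ℝ)

/-- Outcome distribution of the number measurement on the quantum Gaussian state ρ_{θ,N}. -/
noncomputable def Pdist (θ : ℂ) (N : ℝ) (k : ℕ) : ℝ :=
  (1 / (N + 1)) * (N / (N + 1)) ^ k * Real.exp (-(‖θ‖) ^ 2 / (N + 1)) *
    laguerre k (-(‖θ‖) ^ 2 / (N * (N + 1)))

section Aux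

open Complex

lemma integrable_gauss (b : ℝ) (hb : 0 < b) : Integrable (fun w : ℂ => rexp (-b * ‖w‖^2)) := by
  have := GaussianFourier.integrable_cexp_neg_mul_sq_norm_add (V := ℂ) (b := (b:ℂ)) (by simpa using hb) 0 0
  have h2 := this.norm
  refine h2.congr (Filter.Eventually.of_forall fun w => ?_)
  simp [Complex.norm_exp, ← Complex.ofReal_pow]

lemma integrable_pow_gauss (a : ℝ) (ha : 0 < a) (p : ℕ) :
    Integrable (fun w : ℂ => ‖w‖ ^ p * rexp (-a * ‖w‖^2)) := by
  set C : ℝ := 1 + p.factorial * (2/a)^p with hC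
  have hg : Integrable (fun w : ℂ => C * rexp (-(a/2) * ‖w‖^2)) :=
    (integrable_gauss (a/2) (by linarith)).const_mul C
  have hmeas : AEStronglyMeasurable (fun w : ℂ => ‖w‖ ^ p * rexp (-a * ‖w‖^2)) volume := by
    apply Continuous.aestronglyMeasurable
    fun_prop
  refine hg.mono' hmeas (Filter.Eventually.of_forall fun w => ?_)
  rw [Real.norm_eq_abs, _root_.abs_of_nonneg (by positivity)]
  have h1 : ‖w‖ ^ p ≤ 1 + ‖w‖ ^ (2*p) := by
    rcases le_or_gt ‖w‖ 1 with h | h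
    · have h' : ‖w‖ ^ p ≤ 1 := pow_le_one₀ (norm_nonneg _) h
      nlinarith [pow_nonneg (norm_nonneg w) (2*p)]
    · have h' : ‖w‖ ^ p ≤ ‖w‖ ^ (2*p) := pow_le_pow_right₀ h.le (by omega)
      linarith
  have h2 : ‖w‖ ^ (2*p) ≤ p.factorial * (2/a)^p * rexp ((a/2) * ‖w‖^2) := by
    have hx : ((a/2) * ‖w‖^2)^p / p.factorial ≤ rexp ((a/2) * ‖w‖^2) := by
      exact Real.pow_div_factorial_le_exp _ (by positivity) p
    have he : ((a/2) * ‖w‖^2)^p = (a/2)^p * ‖w‖^(2*p) := by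
      rw [mul_pow, pow_mul]
    rw [he] at hx
    have hfac : (0:ℝ) < p.factorial := by positivity
    rw [div_le_iff₀ hfac] at hx
    have : (a/2)^p * ‖w‖^(2*p) ≤ rexp ((a/2)*‖w‖^2) * p.factorial := hx
    have h3 : ‖w‖^(2*p) = (2/a)^p * ((a/2)^p * ‖w‖^(2*p)) := by
      rw [← mul_assoc, ← mul_pow, show (2/a)*(a/2) = (1:ℝ) by
        rw [div_mul_div_comm, mul_comm 2 a, div_self (by positivity)], one_pow, one_mul]
    rw [h3]
    calc (2/a)^p * ((a/2)^p * ‖w‖^(2*p)) ≤ (2/a)^p * (rexp ((a/2)*‖w‖^2) * p.factorial) := by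
          apply mul_le_mul_of_nonneg_left hx (by positivity)
      _ = p.factorial * (2/a)^p * rexp ((a/2) * ‖w‖^2) := by ring
  have E1 : rexp (-a * ‖w‖^2) ≤ rexp (-(a/2) * ‖w‖^2) := by
    apply Real.exp_le_exp.mpr
    nlinarith [sq_nonneg ‖w‖]
  have E2 : rexp ((a/2) * ‖w‖^2) * rexp (-a * ‖w‖^2) = rexp (-(a/2) * ‖w‖^2) := by
    rw [← Real.exp_add]; ring_nf
  have hCpos : (0:ℝ) ≤ (p.factorial : ℝ) * (2/a)^p := by positivity
  rw [hC]
  nlinarith [Real.exp_nonneg (-a * ‖w‖^2), Real.exp_nonneg (-(a/2) * ‖w‖^2),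
    mul_le_mul_of_nonneg_right h1 (Real.exp_nonneg (-a * ‖w‖^2)),
    mul_le_mul_of_nonneg_right h2 (Real.exp_nonneg (-a * ‖w‖^2))]

lemma diag_moment (a : ℝ) (ha : 0 < a) (m : ℕ) :
    ∫ w : ℂ, ‖w‖ ^ (2*m) * rexp (-a * ‖w‖^2) = π * m.factorial / a^(m+1) := by
  have h := Complex.integral_rpow_mul_exp_neg_mul_rpow (p := 2) (q := (2*m : ℕ)) (b := a)
    one_le_two (show (-2:ℝ) < ((2*m:ℕ):ℝ) from lt_of_lt_of_le (by norm_num) (Nat.cast_nonneg _)) ha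
  rw [show ((2*m : ℕ):ℝ) + 2 = ((m:ℝ)+1)*2 by push_cast; ring] at h
  have h2 : ∀ w : ℂ, ‖w‖ ^ ((2*m : ℕ) : ℝ) * rexp (-a * ‖w‖ ^ (2:ℝ)) =
      ‖w‖ ^ (2*m) * rexp (-a * ‖w‖^2) := by
    intro w
    rw [Real.rpow_natCast, show (2:ℝ) = ((2:ℕ):ℝ) by norm_num, Real.rpow_natCast]
  simp_rw [h2] at h
  rw [h]
  rw [show ((m:ℝ)+1)*2/2 = (m:ℝ)+1 by ring, show -(((m:ℝ)+1)*2)/2 = -((m:ℝ)+1) by ring,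
    Real.rpow_neg ha.le, Real.Gamma_nat_eq_factorial,
    show ((m:ℝ)+1) = ((m+1 : ℕ):ℝ) by push_cast; ring, Real.rpow_natCast]
  field_simp

lemma offdiag (a : ℝ) {m n : ℕ} (h : m ≠ n) :
    ∫ w : ℂ, w^m * (starRingEnd ℂ w)^n * (rexp (-a * ‖w‖^2) : ℂ) = 0 := by
  set F : ℂ → ℂ := fun w => w^m * (starRingEnd ℂ w)^n * (rexp (-a * ‖w‖^2) : ℂ) with hF
  have hd : ((m:ℝ) - n) ≠ 0 := by
    intro hc
    exact h (by exact_mod_cast sub_eq_zero.mp hc)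
  set t : ℝ := π / ((m:ℝ) - n) with ht
  set u : Circle := Circle.exp t with hu
  have hrot := ((rotation u).measurePreserving).integral_comp
    (rotation u).toHomeomorph.measurableEmbedding F
  have hpt : ∀ w : ℂ, F (rotation u w) = (-1 : ℂ) * F w := by
    intro w
    have hcoe : (u : ℂ) = Complex.exp (t * Complex.I) := by rw [hu, Circle.coe_exp]
    have habs : ‖(u : ℂ)‖ = 1 := by rw [hcoe, Complex.norm_exp_ofReal_mul_I]
    simp only [rotation_apply, hF]
    have h1 : ‖(u : ℂ) * w‖ = ‖w‖ := by
      rw [norm_mul]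
      rw [habs, one_mul]
    rw [h1, map_mul, mul_pow, mul_pow]
    have h2 : (u:ℂ)^m * (starRingEnd ℂ (u:ℂ))^n = -1 := by
      rw [hcoe, ← Complex.exp_conj]
      simp only [map_mul, Complex.conj_I, Complex.conj_ofReal]
      rw [← Complex.exp_nat_mul, ← Complex.exp_nat_mul, ← Complex.exp_add]
      have : (m : ℂ) * (t * Complex.I) + n * (t * (-Complex.I)) = π * Complex.I := by
        have : ((m : ℂ) - n) * t = π := by
          have : ((m:ℝ) - n) * t = π := by
            rw [ht]; field_simp
          exact_mod_cast congrArg Complex.ofReal this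
        linear_combination Complex.I * this
      rw [this, Complex.exp_pi_mul_I]
    linear_combination (w^m * (starRingEnd ℂ w)^n * (rexp (-a * ‖w‖^2) : ℂ)) * h2
  simp_rw [hpt] at hrot
  rw [integral_const_mul] at hrot
  have : (2 : ℂ) * ∫ w, F w = 0 := by linear_combination -hrot
  simpa using this

lemma my_integral_ofReal {f : ℂ → ℝ} : ∫ x : ℂ, ((f x : ℝ) : ℂ) = ((∫ x : ℂ, f x : ℝ) : ℂ) :=
  integral_ofReal

lemma integrable_mono_gauss (a : ℝ) (ha : 0 < a) (m n : ℕ) :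
    Integrable (fun w : ℂ => w^m * (starRingEnd ℂ w)^n * (rexp (-a * ‖w‖^2) : ℂ)) := by
  refine (integrable_pow_gauss a ha (m+n)).mono' ?_ (Filter.Eventually.of_forall fun w => ?_)
  · exact (((continuous_pow m).mul (Complex.continuous_conj.pow n)).mul
      (Complex.continuous_ofReal.comp (Real.continuous_exp.comp
        (continuous_const.mul (continuous_norm.pow 2))))).aestronglyMeasurable
  · rw [norm_mul, norm_mul, Complex.norm_real, Real.norm_eq_abs,
      _root_.abs_of_nonneg (Real.exp_nonneg _), norm_pow, norm_pow]
    have : ‖(starRingEnd ℂ) w‖ = ‖w‖ := by simp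
    rw [this, ← pow_add]

lemma diag_moment_c (a : ℝ) (ha : 0 < a) (m : ℕ) :
    ∫ w : ℂ, w^m * (starRingEnd ℂ w)^m * (rexp (-a * ‖w‖^2) : ℂ)
      = ((π * m.factorial / a^(m+1) : ℝ) : ℂ) := by
  rw [← diag_moment a ha m, ← my_integral_ofReal]
  congr 1
  funext w
  rw [← mul_pow, Complex.mul_conj]
  push_cast
  rw [Complex.normSq_eq_norm_sq, pow_mul]
  push_cast
  ring

lemma lemC (a : ℝ) (ha : 0 < a) (c : ℂ) (k : ℕ) :
    ∫ w : ℂ, ‖w + c‖ ^ (2*k) * rexp (-a * ‖w‖ ^ 2)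
      = π * k.factorial / a^(k+1) * laguerre k (-(a * ‖c‖ ^ 2)) := by
  -- coerce to ℂ
  have key : ((∫ w : ℂ, ‖w + c‖ ^ (2*k) * rexp (-a * ‖w‖ ^ 2) : ℝ) : ℂ)
      = ((π * k.factorial / a^(k+1) * laguerre k (-(a * ‖c‖ ^ 2)) : ℝ) : ℂ) := by
    rw [← my_integral_ofReal]
    have step1 : ∀ w : ℂ, ((‖w + c‖ ^ (2*k) * rexp (-a * ‖w‖ ^ 2) : ℝ) : ℂ)
        = ∑ m ∈ Finset.range (k+1), ∑ n ∈ Finset.range (k+1),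
          ((k.choose m : ℂ) * (k.choose n : ℂ) * c^(k-m) * (starRingEnd ℂ c)^(k-n)) *
            (w^m * (starRingEnd ℂ w)^n * (rexp (-a * ‖w‖^2) : ℂ)) := by
      intro w
      have e1 : ((‖w + c‖ ^ (2*k) : ℝ) : ℂ) = (w+c)^k * (starRingEnd ℂ (w+c))^k := by
        rw [← mul_pow, Complex.mul_conj, Complex.normSq_eq_norm_sq, pow_mul]
        push_cast
        ring
      rw [Complex.ofReal_mul, e1]
      rw [map_add, add_pow, add_pow]
      rw [Finset.sum_mul_sum]
      rw [Finset.sum_mul]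
      refine Finset.sum_congr rfl fun m hm => ?_
      rw [Finset.sum_mul]
      refine Finset.sum_congr rfl fun n hn => ?_
      push_cast
      ring
    simp_rw [step1]
    rw [integral_finset_sum _ (fun m hm => integrable_finset_sum _
      (fun n hn => ((integrable_mono_gauss a ha m n).const_mul _)))]
    have step2 : ∀ m ∈ Finset.range (k+1),
        (∫ w : ℂ, ∑ n ∈ Finset.range (k+1),
          ((k.choose m : ℂ) * (k.choose n : ℂ) * c^(k-m) * (starRingEnd ℂ c)^(k-n)) *
            (w^m * (starRingEnd ℂ w)^n * (rexp (-a * ‖w‖^2) : ℂ)))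
        = ((k.choose m : ℂ))^2 * (c * starRingEnd ℂ c)^(k-m) * ((π * m.factorial / a^(m+1) : ℝ) : ℂ) := by
      intro m hm
      rw [integral_finset_sum _ (fun n hn => ((integrable_mono_gauss a ha m n).const_mul _))]
      have : ∀ n ∈ Finset.range (k+1),
          (∫ w : ℂ, ((k.choose m : ℂ) * (k.choose n : ℂ) * c^(k-m) * (starRingEnd ℂ c)^(k-n)) *
            (w^m * (starRingEnd ℂ w)^n * (rexp (-a * ‖w‖^2) : ℂ)))
          = if n = m then ((k.choose m : ℂ))^2 * (c * starRingEnd ℂ c)^(k-m) * ((π * m.factorial / a^(m+1) : ℝ) : ℂ) else 0 := by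
        intro n hn
        rw [integral_const_mul]
        by_cases hnm : n = m
        · subst hnm
          rw [if_pos rfl, diag_moment_c a ha n, mul_pow]
          ring
        · rw [if_neg hnm, offdiag a (fun hc => hnm hc.symm), mul_zero]
      rw [Finset.sum_congr rfl this, Finset.sum_ite_eq' (Finset.range (k+1)) m]
      rw [if_pos hm]
    rw [Finset.sum_congr rfl step2]
    -- now the finite sum identity
    have habs : ∀ j : ℕ, (c * starRingEnd ℂ c)^j = ((‖c‖ ^ 2 : ℝ)^j : ℂ) := by
      intro j
      rw [Complex.mul_conj, Complex.normSq_eq_norm_sq]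
    simp_rw [habs]
    push_cast
    rw [laguerre]
    push_cast
    rw [Finset.mul_sum, ← Finset.sum_range_reflect]
    refine Finset.sum_congr rfl fun j hj => ?_
    rw [Finset.mem_range, Nat.lt_succ_iff] at hj
    rw [show k + 1 - 1 - j = k - j from by omega]
    have h1 : k - (k - j) = j := by omega
    rw [h1, Nat.choose_symm hj]
    have hkj' : ((k.factorial : ℂ)) = (k.choose j) * (j.factorial) * ((k-j).factorial) := by
      exact_mod_cast (Nat.choose_mul_factorial_mul_factorial hj).symm
    have hapow' : ((a:ℂ))^(k+1) = (a:ℂ)^((k-j)+1) * (a:ℂ)^j := by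
      rw [← pow_add]
      congr 1
      omega
    have hfj : ((j.factorial : ℂ)) ≠ 0 := by exact_mod_cast (Nat.factorial_ne_zero j)
    have hfkj : (((k-j).factorial : ℂ)) ≠ 0 := by exact_mod_cast (Nat.factorial_ne_zero (k-j))
    have hane : ((a:ℂ)) ≠ 0 := by exact_mod_cast ha.ne'
    rw [hkj', hapow']
    field_simp
    ring
  exact_mod_cast key

end Aux

section Main

open Complex

theorem number_measurement_probability (θ : ℂ) (N : ℝ) (hN : 0 < N) (k : ℕ) :
    (1 / (π * (k.factorial : ℝ) * N)) *
      ∫ ξ : ℂ, ‖ξ‖ ^ (2 * k) * Real.exp (-(‖ξ‖) ^ 2) *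
        Real.exp (-(‖θ - ξ‖) ^ 2 / N) = Pdist θ N k := by
  have hN1 : (0:ℝ) < N + 1 := by linarith
  set a : ℝ := (N+1)/N with ha_def
  have ha : 0 < a := by positivity
  set c : ℂ := (((N+1)⁻¹ : ℝ) : ℂ) * θ with hc_def
  have hcre : c.re = (N+1)⁻¹ * θ.re := by
    rw [hc_def, Complex.mul_re, Complex.ofReal_re, Complex.ofReal_im]; ring
  have hcim : c.im = (N+1)⁻¹ * θ.im := by
    rw [hc_def, Complex.mul_im, Complex.ofReal_re, Complex.ofReal_im]; ring
  have hsq : ∀ z : ℂ, ‖z‖ ^ 2 = z.re^2 + z.im^2 := fun z => by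
    rw [Complex.sq_norm, Complex.normSq_apply]; ring
  have hpt : ∀ ξ : ℂ, ‖ξ‖ ^ (2 * k) * Real.exp (-(‖ξ‖) ^ 2) *
        Real.exp (-(‖θ - ξ‖) ^ 2 / N)
      = rexp (-(‖θ‖)^2/(N+1)) *
        (‖ξ‖ ^ (2*k) * rexp (-a * ‖ξ - c‖^2)) := by
    intro ξ
    rw [mul_assoc, ← Real.exp_add]
    have hexp : -(‖ξ‖) ^ 2 + -(‖θ - ξ‖) ^ 2 / N
        = -(‖θ‖)^2/(N+1) + -a * ‖ξ - c‖^2 := by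
      rw [hsq, hsq, hsq, hsq, Complex.sub_re, Complex.sub_im, Complex.sub_re, Complex.sub_im,
        hcre, hcim, ha_def]
      field_simp
      ring
    rw [hexp, Real.exp_add]
    ring
  rw [show (fun ξ : ℂ => ‖ξ‖ ^ (2 * k) * Real.exp (-(‖ξ‖) ^ 2) *
        Real.exp (-(‖θ - ξ‖) ^ 2 / N)) = fun ξ : ℂ =>
      rexp (-(‖θ‖)^2/(N+1)) *
        (‖ξ‖ ^ (2*k) * rexp (-a * ‖ξ - c‖^2)) from funext hpt]
  rw [integral_const_mul]
  have htrans : ∫ ξ : ℂ, ‖ξ‖ ^ (2*k) * rexp (-a * ‖ξ - c‖^2)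
      = ∫ w : ℂ, ‖w + c‖ ^ (2*k) * rexp (-a * ‖w‖ ^ 2) := by
    rw [← integral_add_right_eq_self
      (fun ξ : ℂ => ‖ξ‖ ^ (2*k) * rexp (-a * ‖ξ - c‖^2)) c]
    simp
  rw [htrans, lemC a ha c k]
  -- final algebra
  have habsc : ‖c‖ ^ 2 = (N+1)⁻¹^2 * ‖θ‖ ^ 2 := by
    rw [hc_def, norm_mul, Complex.norm_real, Real.norm_eq_abs, _root_.abs_of_pos (by positivity), mul_pow]
  have harg : -(a * ‖c‖ ^ 2) = -(‖θ‖) ^ 2 / (N * (N + 1)) := by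
    rw [habsc, ha_def]
    field_simp
  rw [harg, Pdist]
  have hπ : (π : ℝ) ≠ 0 := Real.pi_ne_zero
  have hfk : ((k.factorial : ℝ)) ≠ 0 := by positivity
  have hcoef : 1 / (π * (k.factorial : ℝ) * N) * (π * k.factorial / a^(k+1))
      = (1 / (N + 1)) * (N / (N + 1)) ^ k := by
    rw [ha_def, div_pow]
    have h1 : N^(k+1) ≠ 0 := by positivity
    have h2 : (N+1)^(k+1) ≠ 0 := by positivity
    field_simp
    have h3 : (N+1)⁻¹^k * (N+1)^k = 1 := by
      rw [← mul_pow, inv_mul_cancel₀ hN1.ne', one_pow]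
    linear_combination (-(N*N^k + N^2*N^k)) * h3
  rw [show -(‖θ‖)^2/(N+1) = -((‖θ‖)^2/(N+1)) from by ring]
  calc 1 / (π * ↑k.factorial * N) * (rexp (-((‖θ‖)^2/(N+1))) *
        (π * ↑k.factorial / a ^ (k + 1) * laguerre k (-(‖θ‖) ^ 2 / (N * (N + 1)))))
      = (1 / (π * (k.factorial : ℝ) * N) * (π * k.factorial / a^(k+1))) *
        rexp (-((‖θ‖)^2/(N+1))) *
        laguerre k (-(‖θ‖) ^ 2 / (N * (N + 1))) := by ring
    _ = _ := by
        rw [hcoef]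

end Main
end

section
/- For every c ∈ ℂ and k ∈ ℕ, ∫_{ℂ} |ξ + c|^{2k} e^{-|ξ|²} dξ = π · k! · L_k(-|c|²), where L_k is the k-th Laguerre polynomial and the integral is over ℂ ≅ ℝ² with Lebesgue measure. -/
open MeasureTheory Real

lemma angular_int (p : ℤ) :
    ∫ θ in Set.Ioo (-π) π, Complex.exp (p * θ * Complex.I) =
      if p = 0 then (2 * π : ℂ) else 0 := by
  rw [← integral_Ioc_eq_integral_Ioo,
    ← intervalIntegral.integral_of_le (by linarith [Real.pi_pos] : -π ≤ π)]
  by_cases hp : p = 0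
  · subst hp
    simp only [Int.cast_zero, zero_mul, Complex.exp_zero, if_pos rfl]
    rw [intervalIntegral.integral_const, Complex.real_smul]
    push_cast
    ring
  · rw [if_neg hp]
    have hc : (p : ℂ) * Complex.I ≠ 0 :=
      mul_ne_zero (by exact_mod_cast hp) Complex.I_ne_zero
    have key := integral_exp_mul_complex (a := -π) (b := π) hc
    have e : ∀ θ : ℝ, (p : ℂ) * θ * Complex.I = ((p : ℂ) * Complex.I) * θ := fun θ => by ring
    simp_rw [e]
    rw [key]
    have h1 : (p : ℂ) * Complex.I * (π : ℝ) = (p : ℂ) * ((π : ℝ) * Complex.I) := by ring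
    have h2 : (p : ℂ) * Complex.I * ((-π : ℝ) : ℂ) = ((-p : ℤ) : ℂ) * ((π : ℝ) * Complex.I) := by
      push_cast; ring
    rw [h1, h2, Complex.exp_int_mul, Complex.exp_int_mul, Complex.exp_pi_mul_I, zpow_neg]
    have hsq : ((-1 : ℂ) ^ p) * ((-1 : ℂ) ^ p) = 1 := by rw [← mul_zpow]; norm_num
    have hinv : ((-1 : ℂ) ^ p)⁻¹ = (-1 : ℂ) ^ p := inv_eq_of_mul_eq_one_right hsq
    rw [hinv, sub_self, zero_div]

lemma radial_int (j : ℕ) :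
    ∫ r in Set.Ioi (0 : ℝ), r ^ (2 * j + 1) * rexp (-r ^ 2) = j.factorial / 2 := by
  have h := integral_rpow_mul_exp_neg_rpow (p := 2) (q := ((2 * j + 1 : ℕ) : ℝ))
    (by norm_num) (lt_of_lt_of_le neg_one_lt_zero (by positivity))
  have e : ∫ r in Set.Ioi (0 : ℝ), r ^ (2 * j + 1) * rexp (-r ^ 2)
      = ∫ x in Set.Ioi (0 : ℝ), x ^ ((2 * j + 1 : ℕ) : ℝ) * rexp (-x ^ (2 : ℝ)) := by
    refine setIntegral_congr_fun measurableSet_Ioi fun x _ => ?_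
    rw [Real.rpow_natCast, show (2:ℝ) = ((2:ℕ):ℝ) from by norm_num, Real.rpow_natCast]
  rw [e, h, show (((2 * j + 1 : ℕ) : ℝ) + 1) / 2 = (j : ℝ) + 1 by push_cast; ring,
    Real.Gamma_nat_eq_factorial]
  ring

lemma integrable_gauss_c {b : ℝ} (hb : 0 < b) :
    Integrable (fun ξ : ℂ => rexp (-b * ‖ξ‖ ^ 2)) := by
  have h0 : Integrable (fun p : ℝ × ℝ => rexp (-b * p.1 ^ 2) * rexp (-b * p.2 ^ 2)) := by
    rw [show (volume : Measure (ℝ × ℝ)) = (volume : Measure ℝ).prod volume from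
      MeasureTheory.Measure.volume_eq_prod ℝ ℝ]
    exact (integrable_exp_neg_mul_sq hb).mul_prod (integrable_exp_neg_mul_sq hb)
  have h1 := (Complex.volume_preserving_equiv_real_prod.integrable_comp_emb
    Complex.measurableEquivRealProd.measurableEmbedding).mpr h0
  refine h1.congr (Filter.Eventually.of_forall fun ξ => ?_)
  simp only [Function.comp, Complex.measurableEquivRealProd, Homeomorph.toMeasurableEquiv_coe,
    Complex.equivRealProdCLM]
  show rexp (-b * ξ.re ^ 2) * rexp (-b * ξ.im ^ 2) = rexp (-b * ‖ξ‖ ^ 2)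
  rw [← Real.exp_add, Complex.sq_norm, Complex.normSq_apply]
  ring_nf

lemma pow_le_factorial_mul_exp {t : ℝ} (ht : 0 ≤ t) (p : ℕ) :
    t ^ p ≤ p.factorial * Real.exp t := by
  have h := Real.sum_le_exp_of_nonneg ht (p + 1)
  have h2 : t ^ p / p.factorial ≤ ∑ i ∈ Finset.range (p + 1), t ^ i / i.factorial := by
    refine Finset.single_le_sum (f := fun i => t ^ i / (i.factorial : ℝ))
      (fun i _ => by positivity) (Finset.self_mem_range_succ p)
  have hfac : (0 : ℝ) < p.factorial := by exact_mod_cast p.factorial_pos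
  rw [div_le_iff₀ hfac] at *
  calc t ^ p ≤ (∑ i ∈ Finset.range (p + 1), t ^ i / i.factorial) * p.factorial := h2
    _ ≤ Real.exp t * p.factorial := by
        exact mul_le_mul_of_nonneg_right h hfac.le
    _ = p.factorial * Real.exp t := by ring

lemma integrable_monomial (m n : ℕ) :
    Integrable (fun ξ : ℂ =>
      ξ ^ m * (starRingEnd ℂ ξ) ^ n * (rexp (-(‖ξ‖) ^ 2) : ℂ)) := by
  have hb : (0 : ℝ) < 1 / 2 := by norm_num
  refine Integrable.mono' (((integrable_gauss_c hb).const_mul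
    (((m + n).factorial : ℝ) * Real.exp 1))) ?_ (Filter.Eventually.of_forall fun ξ => ?_)
  · apply Continuous.aestronglyMeasurable
    exact ((continuous_pow m).mul (Complex.continuous_conj.pow n)).mul
      (Complex.continuous_ofReal.comp (Real.continuous_exp.comp
        ((continuous_norm.pow 2).neg)))
  · rw [norm_mul, norm_mul, norm_pow, norm_pow, 
      Complex.norm_conj, Complex.norm_real, Real.norm_eq_abs, abs_of_pos (Real.exp_pos _)]
    set a := ‖ξ‖ with ha
    have ha0 : 0 ≤ a := norm_nonneg ξ
    have key : a ^ (m + n) ≤ ((m + n).factorial : ℝ) * Real.exp a :=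
      pow_le_factorial_mul_exp ha0 (m + n)
    calc a ^ m * a ^ n * rexp (-a ^ 2) = a ^ (m + n) * rexp (-a ^ 2) := by rw [pow_add]
      _ ≤ ((m + n).factorial : ℝ) * Real.exp a * rexp (-a ^ 2) :=
          mul_le_mul_of_nonneg_right key (Real.exp_pos _).le
      _ = ((m + n).factorial : ℝ) * rexp (a + -a ^ 2) := by rw [Real.exp_add]; ring
      _ ≤ ((m + n).factorial : ℝ) * Real.exp 1 * rexp (-(1 / 2) * a ^ 2) := by
          rw [mul_assoc, ← Real.exp_add]
          refine mul_le_mul_of_nonneg_left (Real.exp_le_exp.mpr (by nlinarith)) ?_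
          positivity

lemma moment_int (m n : ℕ) :
    ∫ ξ : ℂ, ξ ^ m * (starRingEnd ℂ ξ) ^ n * (rexp (-(‖ξ‖) ^ 2) : ℂ)
      = if m = n then (π * m.factorial : ℂ) else 0 := by
  rw [← Complex.integral_comp_polarCoord_symm, polarCoord_target]
  have step : ∫ p in Set.Ioi (0 : ℝ) ×ˢ Set.Ioo (-π) π,
      p.1 • ((Complex.polarCoord.symm p) ^ m *
        (starRingEnd ℂ (Complex.polarCoord.symm p)) ^ n *
        (rexp (-(‖Complex.polarCoord.symm p‖) ^ 2) : ℂ))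
      = ∫ p in Set.Ioi (0 : ℝ) ×ˢ Set.Ioo (-π) π,
        ((p.1 ^ (m + n + 1) * rexp (-p.1 ^ 2) : ℝ) : ℂ) *
          Complex.exp ((((m : ℤ) - n : ℤ) : ℂ) * p.2 * Complex.I) := by
    refine setIntegral_congr_fun (measurableSet_Ioi.prod measurableSet_Ioo) fun p hp => ?_
    obtain ⟨hr, _⟩ := hp
    rw [Set.mem_Ioi] at hr
    rw [Complex.norm_polarCoord_symm, abs_of_pos hr, Complex.polarCoord_symm_apply]
    have hcs : (Real.cos p.2 : ℂ) + (Real.sin p.2 : ℂ) * Complex.I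
        = Complex.exp ((p.2 : ℝ) * Complex.I) := by
      rw [Complex.exp_mul_I, Complex.ofReal_cos, Complex.ofReal_sin]
    rw [hcs]
    have e1 : ((p.1 : ℂ) * Complex.exp ((p.2 : ℝ) * Complex.I)) ^ m
        = (p.1 : ℂ) ^ m * Complex.exp ((m : ℂ) * ((p.2 : ℝ) * Complex.I)) := by
      rw [mul_pow, ← Complex.exp_nat_mul]
    have e2 : (starRingEnd ℂ) ((p.1 : ℂ) * Complex.exp ((p.2 : ℝ) * Complex.I)) ^ n
        = (p.1 : ℂ) ^ n * Complex.exp (-((n : ℂ) * ((p.2 : ℝ) * Complex.I))) := by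
      rw [map_mul, Complex.conj_ofReal, ← Complex.exp_conj, map_mul, Complex.conj_ofReal,
        Complex.conj_I, mul_pow, ← Complex.exp_nat_mul]
      congr 2
      ring
    rw [Complex.real_smul, e1, e2]
    rw [show (p.1 : ℂ) * ((p.1 : ℂ) ^ m * Complex.exp ((m : ℂ) * ((p.2 : ℝ) * Complex.I)) *
        ((p.1 : ℂ) ^ n * Complex.exp (-((n : ℂ) * ((p.2 : ℝ) * Complex.I)))) *
        (rexp (-p.1 ^ 2) : ℂ))
        = ((p.1 : ℂ) ^ (m + n + 1) * (rexp (-p.1 ^ 2) : ℂ)) *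
          (Complex.exp ((m : ℂ) * ((p.2 : ℝ) * Complex.I)) *
            Complex.exp (-((n : ℂ) * ((p.2 : ℝ) * Complex.I)))) from by ring]
    rw [← Complex.exp_add]
    congr 1
    · push_cast; ring
    · congr 1; push_cast; ring
  rw [step]
  rw [show (volume : Measure (ℝ × ℝ)) = (volume : Measure ℝ).prod volume from
    MeasureTheory.Measure.volume_eq_prod ℝ ℝ]
  rw [setIntegral_prod_mul (fun r : ℝ => ((r ^ (m + n + 1) * rexp (-r ^ 2) : ℝ) : ℂ))
    (fun θ : ℝ => Complex.exp ((((m : ℤ) - n : ℤ) : ℂ) * θ * Complex.I))]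
  rw [show (∫ x in Set.Ioi (0:ℝ), ((x ^ (m + n + 1) * rexp (-x ^ 2) : ℝ) : ℂ))
      = ((∫ x in Set.Ioi (0:ℝ), x ^ (m + n + 1) * rexp (-x ^ 2) : ℝ) : ℂ) from integral_ofReal,
    angular_int]
  by_cases h : m = n
  · subst h
    rw [if_pos rfl, if_pos (sub_self (m : ℤ)), show m + m + 1 = 2 * m + 1 from by ring,
      radial_int]
    push_cast
    ring
  · rw [if_neg h, if_neg (sub_ne_zero.mpr (by exact_mod_cast h)), mul_zero]

lemma real_sum_eq (k : ℕ) (t : ℝ) :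
    ∑ m ∈ Finset.range (k + 1), (k.choose m : ℝ) ^ 2 * t ^ (k - m) * (π * m.factorial)
      = π * k.factorial * laguerre k (-t) := by
  unfold laguerre
  simp only [neg_neg]
  rw [Finset.mul_sum, ← Finset.sum_range_reflect
    (fun j => π * (k.factorial : ℝ) * ((k.choose j : ℝ) * t ^ j / j.factorial)) (k + 1)]
  refine Finset.sum_congr rfl fun m hm => ?_
  rw [Finset.mem_range] at hm
  have hm' : m ≤ k := Nat.lt_succ_iff.mp hm
  have hidx : k + 1 - 1 - m = k - m := by omega
  rw [hidx, Nat.choose_symm hm']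
  have h : ((k.choose m : ℝ)) * m.factorial * (k - m).factorial = k.factorial := by
    exact_mod_cast congrArg (Nat.cast : ℕ → ℝ) (Nat.choose_mul_factorial_mul_factorial hm')
  have hfac : ((k - m).factorial : ℝ) ≠ 0 := by exact_mod_cast (k - m).factorial_ne_zero
  field_simp
  linear_combination (t ^ (k - m) * (k.choose m : ℝ)) * h

theorem gaussian_moment_laguerre (c : ℂ) (k : ℕ) :
    ∫ ξ : ℂ, ‖ξ + c‖ ^ (2 * k) * Real.exp (-(‖ξ‖) ^ 2)
      = π * (k.factorial : ℝ) * laguerre k (-(‖c‖) ^ 2) := by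
  apply Complex.ofReal_injective
  rw [show (((∫ ξ : ℂ, ‖ξ + c‖ ^ (2 * k) * Real.exp (-(‖ξ‖) ^ 2)) : ℝ) : ℂ)
      = ∫ ξ : ℂ, ((‖ξ + c‖ ^ (2 * k) * Real.exp (-(‖ξ‖) ^ 2) : ℝ) : ℂ)
    from integral_ofReal.symm]
  have key : ∀ ξ : ℂ, ((‖ξ + c‖ ^ (2 * k) * rexp (-(‖ξ‖) ^ 2) : ℝ) : ℂ)
      = ∑ m ∈ Finset.range (k + 1), ∑ n ∈ Finset.range (k + 1),
          ((k.choose m : ℂ) * (k.choose n) * c ^ (k - m) *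
            (starRingEnd ℂ c) ^ (k - n)) *
            (ξ ^ m * (starRingEnd ℂ ξ) ^ n * (rexp (-(‖ξ‖) ^ 2) : ℂ)) := by
    intro ξ
    have h1 : ((‖ξ + c‖ ^ (2 * k) : ℝ) : ℂ)
        = (ξ + c) ^ k * (starRingEnd ℂ (ξ + c)) ^ k := by
      rw [← mul_pow, Complex.mul_conj, Complex.normSq_eq_norm_sq]
      norm_cast
      rw [← pow_mul]
    rw [Complex.ofReal_mul, h1, map_add, add_pow, add_pow, Finset.sum_mul_sum, Finset.sum_mul]
    refine Finset.sum_congr rfl fun m _ => ?_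
    rw [Finset.sum_mul]
    refine Finset.sum_congr rfl fun n _ => ?_
    ring
  have hInt : ∀ m n : ℕ, Integrable (fun ξ : ℂ =>
      ((k.choose m : ℂ) * (k.choose n) * c ^ (k - m) * (starRingEnd ℂ c) ^ (k - n)) *
        (ξ ^ m * (starRingEnd ℂ ξ) ^ n * (rexp (-(‖ξ‖) ^ 2) : ℂ))) :=
    fun m n => (integrable_monomial m n).const_mul _
  rw [integral_congr_ae (Filter.Eventually.of_forall key)]
  rw [integral_finset_sum _ (fun m _ => integrable_finset_sum _ (fun n _ => hInt m n))]
  have inner : ∀ m ∈ Finset.range (k + 1),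
      (∫ ξ : ℂ, ∑ n ∈ Finset.range (k + 1),
        ((k.choose m : ℂ) * (k.choose n) * c ^ (k - m) * (starRingEnd ℂ c) ^ (k - n)) *
          (ξ ^ m * (starRingEnd ℂ ξ) ^ n * (rexp (-(‖ξ‖) ^ 2) : ℂ)))
      = ∑ n ∈ Finset.range (k + 1),
          ((k.choose m : ℂ) * (k.choose n) * c ^ (k - m) * (starRingEnd ℂ c) ^ (k - n)) *
            (if m = n then (π * m.factorial : ℂ) else 0) := by
    intro m _
    rw [integral_finset_sum _ (fun n _ => hInt m n)]
    refine Finset.sum_congr rfl fun n _ => ?_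
    rw [integral_const_mul, moment_int]
  rw [Finset.sum_congr rfl inner]
  have diag : ∀ m ∈ Finset.range (k + 1), (∑ n ∈ Finset.range (k + 1),
      ((k.choose m : ℂ) * (k.choose n) * c ^ (k - m) * (starRingEnd ℂ c) ^ (k - n)) *
        (if m = n then (π * m.factorial : ℂ) else 0))
      = ((‖c‖ ^ 2 : ℝ) : ℂ) ^ (k - m) *
          ((k.choose m : ℂ) ^ 2 * (π * m.factorial)) := by
    intro m hm
    rw [Finset.sum_eq_single m]
    · rw [if_pos rfl]
      have : c ^ (k - m) * (starRingEnd ℂ c) ^ (k - m) = ((‖c‖ ^ 2 : ℝ) : ℂ) ^ (k - m) := by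
        rw [← mul_pow, Complex.mul_conj, Complex.normSq_eq_norm_sq]
      rw [show (k.choose m : ℂ) * (k.choose m) * c ^ (k - m) * (starRingEnd ℂ c) ^ (k - m) *
          (π * m.factorial)
          = (c ^ (k - m) * (starRingEnd ℂ c) ^ (k - m)) * ((k.choose m : ℂ) ^ 2 * (π * m.factorial))
        from by ring, this]
    · intro n _ hn
      rw [if_neg (fun hh => hn hh.symm), mul_zero]
    · intro hmem
      exact absurd hm hmem
  rw [Finset.sum_congr rfl diag]
  rw [show ((π * (k.factorial : ℝ) * laguerre k (-(‖c‖) ^ 2) : ℝ) : ℂ)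
      = ((∑ m ∈ Finset.range (k + 1),
          (k.choose m : ℝ) ^ 2 * ((‖c‖) ^ 2) ^ (k - m) * (π * m.factorial) : ℝ) : ℂ)
    from by rw [real_sum_eq]]
  push_cast
  refine Finset.sum_congr rfl fun m _ => ?_
  ring
end

section
/- For all x > 0 and natural numbers k > l, the ratio L_k(-x)/L_l(-x) of Laguerre polynomial values at negative arguments is strictly monotone increasing in x; for k < l it is strictly monotone decreasing in x. -/
open Finset

/-- TP2 property of binomial coefficients. -/
lemma choose_tp2 {l k j i : ℕ} (hlk : l ≤ k) (hji : j ≤ i) :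
    k.choose j * l.choose i ≤ k.choose i * l.choose j := by
  have hdF : l.descFactorial i * k.descFactorial j ≤
      k.descFactorial i * l.descFactorial j := by
    have h1 : (l - j).descFactorial (i - j) * l.descFactorial j = l.descFactorial i :=
      Nat.descFactorial_mul_descFactorial hji
    have h2 : (k - j).descFactorial (i - j) * k.descFactorial j = k.descFactorial i :=
      Nat.descFactorial_mul_descFactorial hji
    have h3 : (l - j).descFactorial (i - j) ≤ (k - j).descFactorial (i - j) :=
      Nat.descFactorial_le _ (by omega)
    calc l.descFactorial i * k.descFactorial j
        = (l - j).descFactorial (i - j) * (l.descFactorial j * k.descFactorial j) := by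
          rw [← h1]; ring
      _ ≤ (k - j).descFactorial (i - j) * (l.descFactorial j * k.descFactorial j) :=
          Nat.mul_le_mul_right _ h3
      _ = k.descFactorial i * l.descFactorial j := by rw [← h2]; ring
  have e1 : l.descFactorial i * k.descFactorial j
      = (i.factorial * j.factorial) * (k.choose j * l.choose i) := by
    rw [Nat.descFactorial_eq_factorial_mul_choose, Nat.descFactorial_eq_factorial_mul_choose]
    ring
  have e2 : k.descFactorial i * l.descFactorial j
      = (i.factorial * j.factorial) * (k.choose i * l.choose j) := by
    rw [Nat.descFactorial_eq_factorial_mul_choose, Nat.descFactorial_eq_factorial_mul_choose]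
    ring
  rw [e1, e2] at hdF
  exact Nat.le_of_mul_le_mul_left hdF (Nat.mul_pos i.factorial_pos j.factorial_pos)

lemma laguerre_neg_eq (k N : ℕ) (h : k < N) (x : ℝ) :
    laguerre k (-x) = ∑ j ∈ range N, (k.choose j : ℝ) * x ^ j / (j.factorial : ℝ) := by
  unfold laguerre
  rw [Finset.sum_subset (Finset.range_subset_range.2 h)]
  · simp [neg_neg]
  · intro j _ hj
    rw [Nat.choose_eq_zero_of_lt (by simp at hj; omega)]
    simp

lemma laguerre_neg_pos (k : ℕ) {x : ℝ} (hx : 0 ≤ x) : 0 < laguerre k (-x) := by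
  unfold laguerre
  apply Finset.sum_pos'
  · intro j _
    have : (0:ℝ) ≤ (-(-x)) ^ j := by rw [neg_neg]; positivity
    positivity
  · refine ⟨0, Finset.mem_range.2 (by omega), by simp⟩

/-- Symmetrization of a double sum over a square. -/
lemma sum_square_split (F : ℕ → ℕ → ℝ) (N : ℕ) :
    ∑ i ∈ range N, ∑ j ∈ range N, F i j
      = (∑ i ∈ range N, ∑ j ∈ range i, (F i j + F j i)) + ∑ i ∈ range N, F i i := by
  induction N with
  | zero => simp
  | succ N ih =>
    rw [Finset.sum_range_succ, Finset.sum_range_succ (fun i => ∑ j ∈ range i, (F i j + F j i)),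
      Finset.sum_range_succ (fun i => F i i)]
    have h1 : ∑ i ∈ range N, ∑ j ∈ range (N+1), F i j
        = (∑ i ∈ range N, ∑ j ∈ range N, F i j) + ∑ i ∈ range N, F i N := by
      rw [← Finset.sum_add_distrib]
      exact Finset.sum_congr rfl fun i _ => Finset.sum_range_succ _ _
    rw [h1, ih, Finset.sum_range_succ (fun j => F N j), Finset.sum_add_distrib]
    ring

/-- Key inequality: the cross-product inequality for Laguerre values. -/
lemma laguerre_cross (k l : ℕ) (hlk : l < k) {x y : ℝ} (hx : 0 < x) (hxy : x < y) :
    laguerre k (-x) * laguerre l (-y) < laguerre k (-y) * laguerre l (-x) := by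
  set N := k + 1 with hN
  have hkN : k < N := by omega
  have hlN : l < N := by omega
  set a : ℕ → ℝ := fun j => (k.choose j : ℝ) / (j.factorial : ℝ) with ha
  set b : ℕ → ℝ := fun j => (l.choose j : ℝ) / (j.factorial : ℝ) with hb
  have hy : 0 < y := hx.trans hxy
  have hab : ∀ i j : ℕ, j ≤ i → a j * b i ≤ a i * b j := by
    intro i j hji
    have h := choose_tp2 hlk.le hji
    have h' : ((k.choose j : ℕ) * l.choose i : ℝ) ≤ ((k.choose i : ℕ) * l.choose j : ℝ) := by
      exact_mod_cast Nat.cast_le.2 h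
    push_cast at h'
    have hi : (0:ℝ) < (i.factorial : ℝ) := by exact_mod_cast i.factorial_pos
    have hj : (0:ℝ) < (j.factorial : ℝ) := by exact_mod_cast j.factorial_pos
    simp only [ha, hb]
    rw [div_mul_div_comm, div_mul_div_comm, div_le_div_iff₀ (by positivity) (by positivity)]
    nlinarith [mul_le_mul_of_nonneg_right h' (mul_nonneg hi.le hj.le)]
  set F : ℕ → ℕ → ℝ := fun i j => a i * b j * (y ^ i * x ^ j - x ^ i * y ^ j) with hF
  have hD : laguerre k (-y) * laguerre l (-x) - laguerre k (-x) * laguerre l (-y)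
      = ∑ i ∈ range N, ∑ j ∈ range N, F i j := by
    rw [laguerre_neg_eq k N hkN x, laguerre_neg_eq k N hkN y,
      laguerre_neg_eq l N hlN x, laguerre_neg_eq l N hlN y,
      Finset.sum_mul_sum, Finset.sum_mul_sum, ← Finset.sum_sub_distrib]
    refine Finset.sum_congr rfl fun i _ => ?_
    rw [← Finset.sum_sub_distrib]
    refine Finset.sum_congr rfl fun j _ => ?_
    simp only [hF, ha, hb]
    ring
  have hsplit := sum_square_split F N
  have hdiag : ∑ i ∈ range N, F i i = 0 := by
    apply Finset.sum_eq_zero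
    intro i _
    simp only [hF]
    ring
  have hterm : ∀ i j : ℕ, j ≤ i → 0 ≤ F i j + F j i := by
    intro i j hji
    have h1 : F i j + F j i = (a i * b j - a j * b i) * (y ^ i * x ^ j - x ^ i * y ^ j) := by
      simp only [hF]; ring
    rw [h1]
    apply mul_nonneg (by linarith [hab i j hji])
    have h2 : x ^ i * y ^ j ≤ y ^ i * x ^ j := by
      have e1 : x ^ i = x ^ (i - j) * x ^ j := by rw [← pow_add]; congr 1; omega
      have e2 : y ^ i = y ^ (i - j) * y ^ j := by rw [← pow_add]; congr 1; omega
      rw [e1, e2]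
      have h3 : x ^ (i - j) ≤ y ^ (i - j) := pow_le_pow_left₀ hx.le hxy.le _
      have := mul_le_mul_of_nonneg_right h3 (by positivity : (0:ℝ) ≤ x ^ j * y ^ j)
      nlinarith [this]
    linarith
  have hpos : 0 < ∑ i ∈ range N, ∑ j ∈ range i, (F i j + F j i) := by
    apply Finset.sum_pos'
    · intro i _
      exact Finset.sum_nonneg fun j hj => hterm i j (Finset.mem_range.1 hj).le
    · refine ⟨k, Finset.mem_range.2 (by omega), ?_⟩
      apply Finset.sum_pos'
      · intro j hj
        exact hterm k j (Finset.mem_range.1 hj).le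
      · refine ⟨0, Finset.mem_range.2 (by omega), ?_⟩
        have h1 : F k 0 + F 0 k = (a k * b 0 - a 0 * b k) * (y ^ k - x ^ k) := by
          simp only [hF]; ring
        rw [h1]
        have hbk : b k = 0 := by
          simp only [hb, Nat.choose_eq_zero_of_lt hlk]
          simp
        have hb0 : b 0 = 1 := by simp [hb]
        have ha0 : a 0 = 1 := by simp [ha]
        have hak : 0 < a k := by
          simp only [ha, Nat.choose_self]
          positivity
        have hyx : x ^ k < y ^ k := pow_lt_pow_left₀ hxy hx.le (by omega)
        rw [hbk, hb0, ha0]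
        nlinarith
  linarith [hD, hsplit, hdiag, hpos]

theorem laguerre_ratio_monotone (k l : ℕ) :
    (l < k → ∀ x y : ℝ, 0 < x → x < y →
      laguerre k (-x) / laguerre l (-x) < laguerre k (-y) / laguerre l (-y)) ∧
    (k < l → ∀ x y : ℝ, 0 < x → x < y →
      laguerre k (-y) / laguerre l (-y) < laguerre k (-x) / laguerre l (-x)) := by
  constructor
  · intro hlk x y hx hxy
    have hy : 0 < y := hx.trans hxy
    rw [div_lt_div_iff₀ (laguerre_neg_pos l hx.le) (laguerre_neg_pos l hy.le)]
    exact laguerre_cross k l hlk hx hxy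
  · intro hkl x y hx hxy
    have hy : 0 < y := hx.trans hxy
    rw [div_lt_div_iff₀ (laguerre_neg_pos l hy.le) (laguerre_neg_pos l hx.le)]
    have := laguerre_cross l k hkl hx hxy
    nlinarith [this]
end

section
/- The probability distribution P_{θ,N}(k) = (1/(N+1)) (N/(N+1))^k e^{-|θ|²/(N+1)} L_k(-|θ|²/(N(N+1))) on ℕ has mean |θ|² + N and variance N(N+1) + |θ|²(2N+1). -/
/- auxiliary lemmas -/

private lemma choose_id1 (k j : ℕ) :
    (k : ℝ) * k.choose j = j * k.choose j + (j + 1) * k.choose (j + 1) := by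
  rcases le_or_gt j k with h | h
  · have h1 : ((k.choose (j+1) * (j+1) : ℕ) : ℝ) = ((k.choose j * (k - j) : ℕ) : ℝ) := by
      rw [Nat.choose_succ_right_eq]
    push_cast [Nat.cast_sub h] at h1
    nlinarith [h1]
  · rw [Nat.choose_eq_zero_of_lt h, Nat.choose_eq_zero_of_lt (h.trans (Nat.lt_succ_self j))]
    push_cast; ring

private lemma choose_id2 (k j : ℕ) :
    (k : ℝ) ^ 2 * k.choose j = (j : ℝ) ^ 2 * k.choose j
      + ((j : ℝ) + 1) * (2 * j + 1) * k.choose (j + 1)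
      + ((j : ℝ) + 1) * ((j : ℝ) + 2) * k.choose (j + 2) := by
  have h1 := choose_id1 k j
  have h2 := choose_id1 k (j + 1)
  push_cast at h2
  linear_combination ((k : ℝ) + j) * h1 + ((j : ℝ) + 1) * h2

private lemma hasSum_exp0 (z : ℝ) :
    HasSum (fun j : ℕ => z ^ j / (j.factorial : ℝ)) (Real.exp z) := by
  have h : Real.exp z = ∑' n : ℕ, z ^ n / (n.factorial : ℝ) := by
    rw [Real.exp_eq_exp_ℝ, NormedSpace.exp_eq_tsum_div]
  exact h ▸ (Real.summable_pow_div_factorial z).hasSum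

private lemma hasSum_exp1 (z : ℝ) :
    HasSum (fun j : ℕ => (j : ℝ) * z ^ j / (j.factorial : ℝ)) (z * Real.exp z) := by
  set g : ℕ → ℝ := fun j => (j : ℝ) * z ^ j / (j.factorial : ℝ) with hg
  have hshift : ∀ n : ℕ, g (n + 1) = z * (z ^ n / (n.factorial : ℝ)) := by
    intro n
    have h1 : ((n + 1 : ℕ).factorial : ℝ) = (n + 1 : ℝ) * (n.factorial : ℝ) := by
      rw [Nat.factorial_succ]; push_cast; ring
    have hn : (n : ℝ) + 1 ≠ 0 := by positivity
    simp only [hg, h1]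
    push_cast
    rw [pow_succ]
    field_simp
  have hsum1 : Summable fun n : ℕ => g (n + 1) := by
    apply Summable.congr ((Real.summable_pow_div_factorial z).mul_left z)
    intro n; rw [hshift n]
  have hsum : Summable g := (summable_nat_add_iff 1).mp hsum1
  have h0 : g 0 = 0 := by simp [hg]
  have ht : ∑' n, g n = z * Real.exp z := by
    rw [Summable.tsum_eq_zero_add hsum, h0, zero_add, tsum_congr hshift, tsum_mul_left,
      (hasSum_exp0 z).tsum_eq]
  exact ht ▸ hsum.hasSum

private lemma hasSum_exp2 (z : ℝ) :
    HasSum (fun j : ℕ => (j : ℝ) * ((j : ℝ) - 1) * z ^ j / (j.factorial : ℝ))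
      (z ^ 2 * Real.exp z) := by
  set g : ℕ → ℝ := fun j => (j : ℝ) * ((j : ℝ) - 1) * z ^ j / (j.factorial : ℝ) with hg
  have hshift : ∀ n : ℕ, g (n + 2) = z ^ 2 * (z ^ n / (n.factorial : ℝ)) := by
    intro n
    have h1 : ((n + 2 : ℕ).factorial : ℝ)
        = ((n : ℝ) + 2) * ((n : ℝ) + 1) * (n.factorial : ℝ) := by
      show ((n + 1 + 1).factorial : ℝ) = _
      rw [Nat.factorial_succ, Nat.factorial_succ]; push_cast; ring
    have hn1 : (n : ℝ) + 1 ≠ 0 := by positivity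
    have hn2 : (n : ℝ) + 2 ≠ 0 := by positivity
    simp only [hg, h1]
    push_cast
    rw [pow_succ, pow_succ]
    field_simp
    ring
  have hsum2 : Summable fun n : ℕ => g (n + 2) := by
    apply Summable.congr ((Real.summable_pow_div_factorial z).mul_left (z ^ 2))
    intro n; rw [hshift n]
  have hsum : Summable g := (summable_nat_add_iff 2).mp hsum2
  have ht : ∑' n, g n = z ^ 2 * Real.exp z := by
    rw [← Summable.sum_add_tsum_nat_add 2 hsum]
    have h0 : ∑ i ∈ Finset.range 2, g i = 0 := by
      simp [Finset.sum_range_succ, hg]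
    rw [h0, zero_add, tsum_congr hshift, tsum_mul_left, (hasSum_exp0 z).tsum_eq]
  exact ht ▸ hsum.hasSum

set_option maxHeartbeats 1000000 in
/-- Fubini / sum-swap lemma: summing `w k * q^k * L_k(-y)` over `k` equals
summing the closed-form column sums over `j`. -/
private lemma key_swap {q y : ℝ} (hq : 0 ≤ q) (hy : 0 ≤ y) {w : ℕ → ℝ} (hw : ∀ k, 0 ≤ w k)
    {V : ℕ → ℝ}
    (hV : ∀ j, HasSum (fun k => w k * (k.choose j : ℝ) * q ^ k) (V j))
    (hVs : Summable (fun j => y ^ j / (j.factorial : ℝ) * V j)) :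
    HasSum (fun k => w k * q ^ k * laguerre k (-y))
      (∑' j, y ^ j / (j.factorial : ℝ) * V j) := by
  set F : ℕ × ℕ → ℝ :=
    fun p => y ^ p.1 / (p.1.factorial : ℝ) * (w p.2 * (p.2.choose p.1 : ℝ) * q ^ p.2) with hF
  have hnn : 0 ≤ F := by
    intro p
    have : (0:ℝ) ≤ y ^ p.1 / (p.1.factorial : ℝ) := by positivity
    exact mul_nonneg this (mul_nonneg (mul_nonneg (hw _) (by positivity)) (by positivity))
  have h1 : ∀ j, Summable fun k => F (j, k) := by
    intro j
    have h := ((hV j).summable).mul_left (y ^ j / (j.factorial : ℝ))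
    exact h.congr fun k => rfl
  have ht1 : ∀ j, ∑' k, F (j, k) = y ^ j / (j.factorial : ℝ) * V j := by
    intro j
    simp only [hF]
    rw [tsum_mul_left, (hV j).tsum_eq]
  have hFsum : Summable F := by
    rw [summable_prod_of_nonneg hnn]
    exact ⟨h1, hVs.congr fun j => (ht1 j).symm⟩
  have hswap : Summable (fun p : ℕ × ℕ => F (p.2, p.1)) := by
    have := hFsum.prod_symm
    exact this.congr fun p => rfl
  have hinner : ∀ k, Summable fun j => F (j, k) := by
    intro k
    apply summable_of_ne_finset_zero (s := Finset.range (k + 1))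
    intro j hj
    simp only [Finset.mem_range, not_lt] at hj
    have : k.choose j = 0 := Nat.choose_eq_zero_of_lt (by omega)
    simp [hF, this]
  have htk : ∀ k, ∑' j, F (j, k) = w k * q ^ k * laguerre k (-y) := by
    intro k
    rw [tsum_eq_sum (s := Finset.range (k + 1)) (by
      intro j hj
      simp only [Finset.mem_range, not_lt] at hj
      have : k.choose j = 0 := Nat.choose_eq_zero_of_lt (by omega)
      simp [hF, this])]
    unfold laguerre
    rw [Finset.mul_sum]
    apply Finset.sum_congr rfl
    intro j _
    simp only [hF, neg_neg]
    ring
  have hmarg : Summable (fun k => w k * q ^ k * laguerre k (-y)) := by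
    have := hswap.prod
    exact this.congr fun k => htk k
  have hts : ∑' k, w k * q ^ k * laguerre k (-y) = ∑' j, y ^ j / (j.factorial : ℝ) * V j := by
    calc ∑' k, w k * q ^ k * laguerre k (-y)
        = ∑' k, ∑' j, F (j, k) := tsum_congr fun k => (htk k).symm
      _ = ∑' p : ℕ × ℕ, F (p.2, p.1) := (Summable.tsum_prod' hswap fun k => hinner k).symm
      _ = ∑' p : ℕ × ℕ, F p := ((Equiv.prodComm ℕ ℕ).tsum_eq F)
      _ = ∑' j, ∑' k, F (j, k) := Summable.tsum_prod' hFsum h1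
      _ = ∑' j, y ^ j / (j.factorial : ℝ) * V j := tsum_congr ht1
  have hfin := hmarg.hasSum
  rwa [hts] at hfin

theorem Pdist_mean_variance (θ : ℂ) (N : ℝ) (hN : 0 < N) :
    (∑' k : ℕ, (k : ℝ) * Pdist θ N k = (‖θ‖) ^ 2 + N) ∧
    (∑' k : ℕ, ((k : ℝ) - ((‖θ‖) ^ 2 + N)) ^ 2 * Pdist θ N k
        = N * (N + 1) + (‖θ‖) ^ 2 * (2 * N + 1)) := by
  have hN1 : (0:ℝ) < N + 1 := by linarith
  set s : ℝ := ‖θ‖ ^ 2 with hs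
  have hs0 : 0 ≤ s := by positivity
  set q : ℝ := N / (N + 1) with hqdef
  have hq0 : 0 ≤ q := by positivity
  have hq1 : q < 1 := by rw [hqdef, div_lt_one hN1]; linarith
  have hqn : ‖q‖ < 1 := by rwa [Real.norm_eq_abs, abs_of_nonneg hq0]
  set y : ℝ := s / (N * (N + 1)) with hydef
  have hy0 : 0 ≤ y := by positivity
  set z : ℝ := y * N with hzdef
  have hz0 : 0 ≤ z := mul_nonneg hy0 hN.le
  have hzs : z * (N + 1) = s := by
    rw [hzdef, hydef]; field_simp
  -- closed form for ∑_k C(k,j) q^k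
  have hS : ∀ j : ℕ, HasSum (fun k : ℕ => (k.choose j : ℝ) * q ^ k) (N ^ j * (N + 1)) := by
    intro j
    set f : ℕ → ℝ := fun k => (k.choose j : ℝ) * q ^ k with hf
    have hshift : ∀ n : ℕ, f (n + j) = ((n + j).choose j : ℝ) * q ^ n * q ^ j := by
      intro n; rw [hf]; simp only; rw [pow_add]; ring
    have hsum1 : Summable fun n => f (n + j) := by
      apply Summable.congr ((summable_choose_mul_geometric_of_norm_lt_one j hqn).mul_right (q ^ j))
      intro n; rw [hshift n]
    have hsum : Summable f := (summable_nat_add_iff j).mp hsum1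
    have hval : ∑' k, f k = N ^ j * (N + 1) := by
      rw [← Summable.sum_add_tsum_nat_add j hsum]
      have h0 : ∑ i ∈ Finset.range j, f i = 0 := by
        apply Finset.sum_eq_zero
        intro i hi
        simp only [Finset.mem_range] at hi
        simp [hf, Nat.choose_eq_zero_of_lt hi]
      rw [h0, zero_add, tsum_congr hshift, tsum_mul_right,
        tsum_choose_mul_geometric_of_norm_lt_one j hqn]
      have h1q : 1 - q = 1 / (N + 1) := by rw [hqdef]; field_simp; ring
      rw [h1q, hqdef]
      have hNe : (N + 1 : ℝ) ≠ 0 := hN1.ne'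
      field_simp
      rw [pow_succ]
      field_simp
      ring
    have hfin := hsum.hasSum
    rwa [hval] at hfin
  -- k-sums with weights 1, k, k^2
  have hS1 : ∀ j : ℕ, HasSum (fun k : ℕ => (k : ℝ) * (k.choose j : ℝ) * q ^ k)
      ((j : ℝ) * (N ^ j * (N + 1)) + ((j : ℝ) + 1) * (N ^ (j+1) * (N + 1))) := by
    intro j
    have h := ((hS j).mul_left (j : ℝ)).add ((hS (j+1)).mul_left ((j : ℝ) + 1))
    have he : (fun k : ℕ => (j : ℝ) * ((k.choose j : ℝ) * q ^ k)
        + ((j : ℝ) + 1) * ((k.choose (j+1) : ℝ) * q ^ k))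
        = fun k : ℕ => (k : ℝ) * (k.choose j : ℝ) * q ^ k := by
      funext k
      have h := choose_id1 k j
      push_cast at h ⊢
      linear_combination (-(q ^ k)) * h
    rwa [he] at h
  have hS2 : ∀ j : ℕ, HasSum (fun k : ℕ => (k : ℝ) ^ 2 * (k.choose j : ℝ) * q ^ k)
      ((j : ℝ) ^ 2 * (N ^ j * (N + 1))
        + ((j : ℝ) + 1) * (2 * j + 1) * (N ^ (j+1) * (N + 1))
        + ((j : ℝ) + 1) * ((j : ℝ) + 2) * (N ^ (j+2) * (N + 1))) := by
    intro j
    have h := (((hS j).mul_left ((j : ℝ) ^ 2)).add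
        ((hS (j+1)).mul_left (((j : ℝ) + 1) * (2 * j + 1)))).add
        ((hS (j+2)).mul_left (((j : ℝ) + 1) * ((j : ℝ) + 2)))
    have he : (fun k : ℕ => ((j : ℝ) ^ 2 * ((k.choose j : ℝ) * q ^ k)
        + ((j : ℝ) + 1) * (2 * j + 1) * ((k.choose (j+1) : ℝ) * q ^ k))
        + ((j : ℝ) + 1) * ((j : ℝ) + 2) * ((k.choose (j+2) : ℝ) * q ^ k))
        = fun k : ℕ => (k : ℝ) ^ 2 * (k.choose j : ℝ) * q ^ k := by
      funext k
      have h := choose_id2 k j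
      push_cast at h ⊢
      linear_combination (-(q ^ k)) * h
    rwa [he] at h
  -- j-series sums (with z = y * N)
  have hE0 := hasSum_exp0 z
  have hE1 := hasSum_exp1 z
  have hE2 := hasSum_exp2 z
  -- T0 : ∑_j y^j/j! * V0 j
  have hT0 : HasSum (fun j : ℕ => y ^ j / (j.factorial : ℝ) * (N ^ j * (N + 1)))
      ((N + 1) * Real.exp z) := by
    have h := hE0.mul_left (N + 1)
    have he : (fun j : ℕ => (N + 1) * (z ^ j / (j.factorial : ℝ)))
        = fun j : ℕ => y ^ j / (j.factorial : ℝ) * (N ^ j * (N + 1)) := by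
      funext j; rw [hzdef, mul_pow]; ring
    rwa [he] at h
  have hT1 : HasSum (fun j : ℕ => y ^ j / (j.factorial : ℝ)
        * ((j : ℝ) * (N ^ j * (N + 1)) + ((j : ℝ) + 1) * (N ^ (j+1) * (N + 1))))
      ((N + 1) * (z * Real.exp z) + N * (N + 1) * (z * Real.exp z + Real.exp z)) := by
    have h := (hE1.mul_left (N + 1)).add ((hE1.add hE0).mul_left (N * (N + 1)))
    have he : (fun j : ℕ => (N + 1) * ((j : ℝ) * z ^ j / (j.factorial : ℝ))
        + N * (N + 1) * ((j : ℝ) * z ^ j / (j.factorial : ℝ) + z ^ j / (j.factorial : ℝ)))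
        = fun j : ℕ => y ^ j / (j.factorial : ℝ)
          * ((j : ℝ) * (N ^ j * (N + 1)) + ((j : ℝ) + 1) * (N ^ (j+1) * (N + 1))) := by
      funext j
      rw [hzdef, mul_pow, pow_succ]
      ring
    rwa [he] at h
  have hT2 : HasSum (fun j : ℕ => y ^ j / (j.factorial : ℝ)
        * ((j : ℝ) ^ 2 * (N ^ j * (N + 1))
          + ((j : ℝ) + 1) * (2 * j + 1) * (N ^ (j+1) * (N + 1))
          + ((j : ℝ) + 1) * ((j : ℝ) + 2) * (N ^ (j+2) * (N + 1))))
      ((N + 1) * (z ^ 2 * Real.exp z + z * Real.exp z)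
        + N * (N + 1) * (2 * (z ^ 2 * Real.exp z) + 5 * (z * Real.exp z) + Real.exp z)
        + N ^ 2 * (N + 1) * (z ^ 2 * Real.exp z + 4 * (z * Real.exp z)
          + 2 * Real.exp z)) := by
    have h := (((hE2.add hE1).mul_left (N + 1)).add
        (((hE2.mul_left 2).add ((hE1.mul_left 5).add hE0)).mul_left (N * (N + 1)))).add
        ((hE2.add ((hE1.mul_left 4).add (hE0.mul_left 2))).mul_left (N ^ 2 * (N + 1)))
    have he : (fun j : ℕ => ((N + 1) * ((j : ℝ) * ((j : ℝ) - 1) * z ^ j / (j.factorial : ℝ)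
          + (j : ℝ) * z ^ j / (j.factorial : ℝ))
        + N * (N + 1) * (2 * ((j : ℝ) * ((j : ℝ) - 1) * z ^ j / (j.factorial : ℝ))
          + (5 * ((j : ℝ) * z ^ j / (j.factorial : ℝ)) + z ^ j / (j.factorial : ℝ))))
        + N ^ 2 * (N + 1) * ((j : ℝ) * ((j : ℝ) - 1) * z ^ j / (j.factorial : ℝ)
          + (4 * ((j : ℝ) * z ^ j / (j.factorial : ℝ)) + 2 * (z ^ j / (j.factorial : ℝ)))))
        = fun j : ℕ => y ^ j / (j.factorial : ℝ)
          * ((j : ℝ) ^ 2 * (N ^ j * (N + 1))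
            + ((j : ℝ) + 1) * (2 * j + 1) * (N ^ (j+1) * (N + 1))
            + ((j : ℝ) + 1) * ((j : ℝ) + 2) * (N ^ (j+2) * (N + 1))) := by
      funext j
      rw [hzdef, mul_pow, pow_succ, pow_succ]
      ring
    rw [he] at h
    convert h using 1
    · rfl
    ring
  -- apply key_swap
  have hK0 := key_swap hq0 hy0 (w := fun _ => (1:ℝ)) (fun _ => zero_le_one)
      (fun j => by simpa using hS j) hT0.summable
  have hK1 := key_swap hq0 hy0 (w := fun k => (k : ℝ)) (fun k => Nat.cast_nonneg k)
      (fun j => hS1 j) hT1.summable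
  have hK2 := key_swap hq0 hy0 (w := fun k => (k : ℝ) ^ 2) (fun k => by positivity)
      (fun j => hS2 j) hT2.summable
  rw [hT0.tsum_eq] at hK0
  rw [hT1.tsum_eq] at hK1
  rw [hT2.tsum_eq] at hK2
  -- relate Pdist to the key_swap form
  have hPdist : ∀ k : ℕ, Pdist θ N k
      = (1 / (N + 1) * Real.exp (-z)) * (q ^ k * laguerre k (-y)) := by
    intro k
    rw [Pdist]
    have h1 : -(‖θ‖) ^ 2 / (N + 1) = -z := by
      rw [← hs, ← hzs]; field_simp
    have h2 : -(‖θ‖) ^ 2 / (N * (N + 1)) = -y := by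
      rw [← hs, hydef, neg_div]
    rw [h1, h2, hqdef]
    ring
  set c : ℝ := 1 / (N + 1) * Real.exp (-z) with hc
  have hexp : Real.exp (-z) * Real.exp z = 1 := by
    rw [← Real.exp_add]; simp
  -- HasSum for moments of Pdist
  have hM0 : HasSum (fun k => Pdist θ N k) 1 := by
    have h := hK0.mul_left c
    have he : (fun k : ℕ => c * (1 * q ^ k * laguerre k (-y))) = fun k : ℕ => Pdist θ N k := by
      funext k; rw [hPdist k, hc]; ring
    rw [he] at h
    have : c * ((N + 1) * Real.exp z) = 1 := by
      rw [hc, Real.exp_neg]; field_simp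
    rwa [this] at h
  have hM1 : HasSum (fun k : ℕ => (k : ℝ) * Pdist θ N k) (s + N) := by
    have h := hK1.mul_left c
    have he : (fun k : ℕ => c * ((k : ℝ) * q ^ k * laguerre k (-y)))
        = fun k : ℕ => (k : ℝ) * Pdist θ N k := by
      funext k; rw [hPdist k, hc]; ring
    rw [he] at h
    have hv : c * ((N + 1) * (z * Real.exp z) + N * (N + 1) * (z * Real.exp z + Real.exp z))
        = s + N := by
      rw [hc, Real.exp_neg, ← hzs]; field_simp; ring
    rwa [hv] at h
  have hM2 : HasSum (fun k : ℕ => (k : ℝ) ^ 2 * Pdist θ N k)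
      ((N + 1) ^ 2 * z ^ 2 + (4 * N ^ 2 + 5 * N + 1) * z + 2 * N ^ 2 + N) := by
    have h := hK2.mul_left c
    have he : (fun k : ℕ => c * ((k : ℝ) ^ 2 * q ^ k * laguerre k (-y)))
        = fun k : ℕ => (k : ℝ) ^ 2 * Pdist θ N k := by
      funext k; rw [hPdist k, hc]; ring
    rw [he] at h
    have hv : c * ((N + 1) * (z ^ 2 * Real.exp z + z * Real.exp z)
        + N * (N + 1) * (2 * (z ^ 2 * Real.exp z) + 5 * (z * Real.exp z) + Real.exp z)
        + N ^ 2 * (N + 1) * (z ^ 2 * Real.exp z + 4 * (z * Real.exp z) + 2 * Real.exp z))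
        = (N + 1) ^ 2 * z ^ 2 + (4 * N ^ 2 + 5 * N + 1) * z + 2 * N ^ 2 + N := by
      rw [hc, Real.exp_neg]; field_simp; ring
    rwa [hv] at h
  constructor
  · exact hM1.tsum_eq
  · set μ : ℝ := s + N with hμ
    have hvar : HasSum (fun k : ℕ => ((k : ℝ) - μ) ^ 2 * Pdist θ N k)
        (((N + 1) ^ 2 * z ^ 2 + (4 * N ^ 2 + 5 * N + 1) * z + 2 * N ^ 2 + N)
          + (-(2 * μ)) * (s + N) + μ ^ 2 * 1) := by
      have h := (hM2.add (hM1.mul_left (-(2 * μ)))).add (hM0.mul_left (μ ^ 2))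
      have he : (fun k : ℕ => ((k : ℝ) ^ 2 * Pdist θ N k
            + (-(2 * μ)) * ((k : ℝ) * Pdist θ N k)) + μ ^ 2 * Pdist θ N k)
          = fun k : ℕ => ((k : ℝ) - μ) ^ 2 * Pdist θ N k := by
        funext k; ring
      rwa [he] at h
    rw [hvar.tsum_eq, hμ, ← hzs]
    ring
end

section
/- Let {p_w}_{w∈W} (W ⊂ ℝ an interval) be a one-parameter exponential family p_w(ω) = exp(X(ω)w − ψ(w)) on a countable set Ω, and fix C ∈ W and level α ∈ (0,1). Then there exist K ∈ ℝ and γ ∈ (0,1] such that the test function φ(ω) = 0 if X(ω) < K, γ if X(ω) = K, 1 if X(ω) > K satisfies E_{p_C}[φ] = α, and φ is uniformly most powerful of level α for testing H₀: w ≤ C vs H₁: w > C; i.e. for any other test function φ' : Ω → [0,1] with sup_{w≤C} E_{p_w}[φ'] ≤ α, we have E_{p_w}[φ'] ≤ E_{p_w}[φ] for all w > C. -/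
section aux

variable {Ω : Type*} {p : Ω → ℝ}

private lemma summable_ite_aux (hs : Summable p) (hpos : ∀ ω, 0 ≤ p ω)
    (P : Ω → Prop) [DecidablePred P] :
    Summable (fun ω => if P ω then p ω else 0) := by
  refine Summable.of_nonneg_of_le (fun ω => ?_) (fun ω => ?_) hs
  · split <;> simp [hpos ω]
  · split <;> simp [hpos ω]

private lemma summable_ite_aux' (hs : Summable p) (hpos : ∀ ω, 0 ≤ p ω)
    (P : Ω → Prop) [DecidablePred P] :
    Summable (fun ω => if P ω then 0 else p ω) := by
  refine Summable.of_nonneg_of_le (fun ω => ?_) (fun ω => ?_) hs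
  · split <;> simp [hpos ω]
  · split <;> simp [hpos ω]

private lemma tsum_ite_le_aux (hs : Summable p) (hpos : ∀ ω, 0 ≤ p ω)
    (P : Ω → Prop) [DecidablePred P] {a : ℝ}
    (h : ∀ F : Finset Ω, (∀ ω ∈ F, P ω) → ∑ ω ∈ F, p ω ≤ a) :
    ∑' ω, (if P ω then p ω else 0) ≤ a := by
  refine Summable.tsum_le_of_sum_le (summable_ite_aux hs hpos P) (fun F => ?_)
  rw [← Finset.sum_filter]
  exact h _ (fun ω hω => (Finset.mem_filter.mp hω).2)

private lemma sum_le_tsum_ite_aux (hs : Summable p) (hpos : ∀ ω, 0 ≤ p ω)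
    (P : Ω → Prop) [DecidablePred P] (F : Finset Ω)
    (hF : ∀ ω ∈ F, P ω) : ∑ ω ∈ F, p ω ≤ ∑' ω, (if P ω then p ω else 0) := by
  have h : ∑ ω ∈ F, p ω = ∑ ω ∈ F, (if P ω then p ω else 0) :=
    Finset.sum_congr rfl (fun ω hω => (if_pos (hF ω hω)).symm)
  rw [h]
  exact Summable.sum_le_tsum F (fun ω _ => by split <;> simp [hpos ω]) (summable_ite_aux hs hpos P)

private lemma tsum_ite_add_not_aux (hs : Summable p) (hpos : ∀ ω, 0 ≤ p ω)
    (P : Ω → Prop) [DecidablePred P] :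
    (∑' ω, (if P ω then p ω else 0)) + (∑' ω, (if P ω then 0 else p ω)) = ∑' ω, p ω := by
  rw [← Summable.tsum_add (summable_ite_aux hs hpos P) (summable_ite_aux' hs hpos P)]
  exact tsum_congr fun ω => by split <;> simp

/-- Existence of the threshold/randomization pair with exact level α. -/
private lemma exists_threshold {X : Ω → ℝ} (hs : Summable p) (hpos : ∀ ω, 0 < p ω)
    (hsum1 : ∑' ω, p ω = 1) {α : ℝ} (hα0 : 0 < α) (hα1 : α < 1)
    (hloc : ∀ x y : ℝ, {ω | x < X ω ∧ X ω ≤ y}.Finite) :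
    ∃ K γ : ℝ, γ ∈ Set.Ioc (0:ℝ) 1 ∧
      (∑' ω, (if K < X ω then p ω else 0)) +
        γ * (∑' ω, (if X ω = K then p ω else 0)) = α := by
  classical
  have hpos' : ∀ ω, 0 ≤ p ω := fun ω => (hpos ω).le
  set G : ℝ → ℝ := fun t => ∑' ω, (if t < X ω then p ω else 0) with hGdef
  set S : Set ℝ := {t | G t ≤ α} with hSdef
  -- S nonempty
  have hSne : S.Nonempty := by
    obtain ⟨F, hF⟩ : ∃ F : Finset Ω, 1 - α < ∑ ω ∈ F, p ω := by
      have h1 : (1:ℝ) - α < 1 := by linarith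
      have h2 := hs.hasSum
      rw [hsum1] at h2
      exact (h2.eventually (eventually_gt_nhds h1)).exists
    have hFne : F.Nonempty := by
      rcases F.eq_empty_or_nonempty with h | h
      · rw [h] at hF; simp at hF; linarith
      · exact h
    refine ⟨F.sup' hFne X, ?_⟩
    refine tsum_ite_le_aux hs hpos' _ (fun F' hF' => ?_)
    have hdisj : Disjoint F' F := by
      rw [Finset.disjoint_left]
      intro ω hω hωF
      exact absurd (Finset.le_sup' X hωF) (not_le.mpr (hF' ω hω))
    have : ∑ ω ∈ F' ∪ F, p ω ≤ 1 := by
      rw [← hsum1]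
      exact Summable.sum_le_tsum _ (fun ω _ => hpos' ω) hs
    rw [Finset.sum_union hdisj] at this
    linarith
  -- S bounded below
  have hSbdd : BddBelow S := by
    obtain ⟨F, hF⟩ : ∃ F : Finset Ω, α < ∑ ω ∈ F, p ω := by
      have h2 := hs.hasSum
      rw [hsum1] at h2
      exact (h2.eventually (eventually_gt_nhds hα1)).exists
    have hFne : F.Nonempty := by
      rcases F.eq_empty_or_nonempty with h | h
      · rw [h] at hF; simp at hF; linarith
      · exact h
    refine ⟨F.inf' hFne X - 1, fun t ht => ?_⟩
    by_contra hlt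
    push_neg at hlt
    have hsub : ∑ ω ∈ F, p ω ≤ G t := by
      refine sum_le_tsum_ite_aux hs hpos' _ F (fun ω hω => ?_)
      have := Finset.inf'_le X hω
      linarith
    have : G t ≤ α := ht
    linarith
  set K := sInf S with hKdef
  -- G K ≤ α
  have hGK : G K ≤ α := by
    refine tsum_ite_le_aux hs hpos' _ (fun F hF => ?_)
    rcases F.eq_empty_or_nonempty with h | hFne
    · rw [h]; simp; linarith
    · set t := F.inf' hFne X with htdef
      have hKt : K < t := by
        obtain ⟨ω, hω, hωe⟩ := Finset.exists_mem_eq_inf' hFne X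
        rw [htdef, hωe]; exact hF ω hω
      obtain ⟨s, hsS, hst⟩ := (csInf_lt_iff hSbdd hSne).mp hKt
      have : ∑ ω ∈ F, p ω ≤ G s := by
        refine sum_le_tsum_ite_aux hs hpos' _ F (fun ω hω => ?_)
        have := Finset.inf'_le X hω
        rw [← htdef] at this
        linarith
      exact this.trans hsS
  -- P(X ≥ K) ≥ α, i.e. α ≤ G K + B K
  have hBK : α ≤ G K + ∑' ω, (if X ω = K then p ω else 0) := by
    have hGB : G K + (∑' ω, (if X ω = K then p ω else 0)) =
        ∑' ω, (if K ≤ X ω then p ω else 0) := by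
      rw [hGdef]
      rw [← Summable.tsum_add (summable_ite_aux hs hpos' _) (summable_ite_aux hs hpos' _)]
      refine tsum_congr fun ω => ?_
      rcases lt_trichotomy (X ω) K with h | h | h
      · rw [if_neg (by linarith), if_neg (by exact fun he => absurd he (ne_of_lt h)),
          if_neg (not_le.mpr h)]
        ring
      · rw [if_neg (by linarith), if_pos h, if_pos (le_of_eq h.symm)]
        ring
      · rw [if_pos h, if_neg (by exact fun he => absurd he (ne_of_gt h)), if_pos h.le]
        ring
    rw [hGB]
    -- show ∑' ite(X < K) ≤ 1 - α, then use partition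
    have hpart := tsum_ite_add_not_aux hs hpos' (fun ω => K ≤ X ω)
    rw [hsum1] at hpart
    have hlt : (∑' ω, (if K ≤ X ω then 0 else p ω)) ≤ 1 - α := by
      have heq : (∑' ω, (if K ≤ X ω then (0:ℝ) else p ω)) =
          ∑' ω, (if X ω < K then p ω else 0) := by
        refine tsum_congr fun ω => ?_
        rcases le_or_gt K (X ω) with h | h
        · rw [if_pos h, if_neg (not_lt.mpr h)]
        · rw [if_neg (not_le.mpr h), if_pos h]
      rw [heq]
      refine tsum_ite_le_aux hs hpos' _ (fun F hF => ?_)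
      rcases F.eq_empty_or_nonempty with h | hFne
      · rw [h]; simp; linarith
      · set t := F.sup' hFne X with htdef
        have htK : t < K := by
          obtain ⟨ω, hω, hωe⟩ := Finset.exists_mem_eq_sup' hFne X
          rw [htdef, hωe]; exact hF ω hω
        have htS : ¬ (t ∈ S) := fun h => absurd (csInf_le hSbdd h) (not_le.mpr htK)
        have hGt : α < G t := lt_of_not_ge htS
        -- ∑ F ≤ 1 - G t
        have hpart2 := tsum_ite_add_not_aux hs hpos' (fun ω => t < X ω)
        rw [hsum1] at hpart2
        have hle : ∑ ω ∈ F, p ω ≤ ∑' ω, (if t < X ω then (0:ℝ) else p ω) := by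
          have heq2 : (∑' ω, (if t < X ω then (0:ℝ) else p ω)) =
              ∑' ω, (if ¬ (t < X ω) then p ω else 0) := by
            refine tsum_congr fun ω => ?_
            by_cases h : t < X ω
            · rw [if_pos h, if_neg (by simpa using h)]
            · rw [if_neg h, if_pos h]
          rw [heq2]
          refine sum_le_tsum_ite_aux hs hpos' _ F (fun ω hω => ?_)
          exact not_lt.mpr (Finset.le_sup' X hω)
        have : G t = ∑' ω, (if t < X ω then p ω else 0) := rfl
        linarith
    linarith
  -- case split
  by_cases hcase : G K < α
  · -- randomize at K
    set B := ∑' ω, (if X ω = K then p ω else 0) with hBdef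
    have hBpos : 0 < B := by
      have : α ≤ G K + B := hBK
      linarith
    refine ⟨K, (α - G K) / B, ⟨div_pos (by linarith) hBpos, ?_⟩, ?_⟩
    · rw [div_le_one hBpos]; linarith
    · field_simp
      show G K * B + (α - G K) * B = α * B
      ring
  · -- G K = α: move threshold up to the next atom
    have hGKeq : G K = α := le_antisymm hGK (not_lt.mp hcase)
    obtain ⟨ω₁, hω₁⟩ : ∃ ω, K < X ω := by
      by_contra h
      push_neg at h
      have h2 : G K = ∑' _ : Ω, (0:ℝ) :=
        tsum_congr fun ω => if_neg (not_lt.mpr (h ω))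
      rw [tsum_zero] at h2
      rw [h2] at hGKeq; linarith
    set T := {ω | K < X ω ∧ X ω ≤ X ω₁} with hTdef
    have hTfin : T.Finite := hloc K (X ω₁)
    have hω₁T : ω₁ ∈ hTfin.toFinset := by
      rw [Set.Finite.mem_toFinset]; exact ⟨hω₁, le_refl _⟩
    have hFne : hTfin.toFinset.Nonempty := ⟨ω₁, hω₁T⟩
    obtain ⟨ω₀, hω₀, hω₀e⟩ := Finset.exists_mem_eq_inf' hFne X
    set x₀ := X ω₀ with hx₀def
    have hω₀T : ω₀ ∈ T := (Set.Finite.mem_toFinset hTfin).mp hω₀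
    have hKx₀ : K < x₀ := hω₀T.1
    -- no X-values strictly between K and x₀
    have hgap : ∀ ω, K < X ω → x₀ ≤ X ω := by
      intro ω hω
      by_contra h
      push_neg at h
      have hωT : ω ∈ hTfin.toFinset := by
        rw [Set.Finite.mem_toFinset]
        exact ⟨hω, by linarith [hω₀T.2]⟩
      have := Finset.inf'_le X hωT
      rw [← hω₀e] at h
      exact absurd this (not_le.mpr h)
    refine ⟨x₀, 1, ⟨one_pos, le_refl 1⟩, ?_⟩
    rw [one_mul]
    have hsplit : G K = (∑' ω, (if x₀ < X ω then p ω else 0)) +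
        ∑' ω, (if X ω = x₀ then p ω else 0) := by
      rw [hGdef]
      rw [← Summable.tsum_add (summable_ite_aux hs hpos' _) (summable_ite_aux hs hpos' _)]
      refine tsum_congr fun ω => ?_
      rcases le_or_gt (X ω) K with h | h
      · rw [if_neg (not_lt.mpr h), if_neg (not_lt.mpr (by linarith)),
          if_neg (by intro he; rw [he] at h; linarith)]
        ring
      · have hx := hgap ω h
        rcases eq_or_lt_of_le hx with he | hlt
        · rw [if_pos h, if_neg (not_lt.mpr he.ge), if_pos he.symm]; ring
        · rw [if_pos h, if_pos hlt, if_neg (by intro he; rw [he] at hlt; exact lt_irrefl _ hlt)]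
          ring
    rw [← hsplit, hGKeq]

end aux

set_option maxHeartbeats 1000000

/-- UMP test for a one-sided hypothesis in a one-parameter exponential family
(Theorem 4.1 / Lehmann): existence of a threshold test with randomization that has
exact level α and is uniformly most powerful. -/
theorem ump_one_parameter_exponential_family
    {Ω : Type*} [Countable Ω] (X : Ω → ℝ) (ψ : ℝ → ℝ) (W : Set ℝ) (hW : W.OrdConnected)
    (hprob : ∀ w ∈ W, ∑' ω : Ω, Real.exp (X ω * w - ψ w) = 1)
    (C : ℝ) (hC : C ∈ W) (α : ℝ) (hα : α ∈ Set.Ioo (0:ℝ) 1) :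
    ∃ (K : ℝ) (γ : ℝ), γ ∈ Set.Ioc (0:ℝ) 1 ∧
      (∑' ω : Ω, (if X ω < K then (0:ℝ) else if X ω = K then γ else 1) *
          Real.exp (X ω * C - ψ C)) = α ∧
      ∀ φ' : Ω → ℝ, (∀ ω, φ' ω ∈ Set.Icc (0:ℝ) 1) →
        (∀ w ∈ W, w ≤ C → ∑' ω : Ω, φ' ω * Real.exp (X ω * w - ψ w) ≤ α) →
        ∀ w ∈ W, C < w →
          ∑' ω : Ω, φ' ω * Real.exp (X ω * w - ψ w) ≤
            ∑' ω : Ω, (if X ω < K then (0:ℝ) else if X ω = K then γ else 1) *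
              Real.exp (X ω * w - ψ w) := by
  classical
  obtain ⟨hα0, hα1⟩ := hα
  have hp0 : ∀ ω : Ω, 0 < Real.exp (X ω * C - ψ C) := fun ω => Real.exp_pos _
  have hpsum1 : ∑' ω : Ω, Real.exp (X ω * C - ψ C) = 1 := hprob C hC
  have hpsumm : Summable (fun ω : Ω => Real.exp (X ω * C - ψ C)) := by
    by_contra h
    rw [tsum_eq_zero_of_not_summable h] at hpsum1
    norm_num at hpsum1
  -- local finiteness of X-levels on bounded intervals
  have hloc : ∀ x y : ℝ, {ω : Ω | x < X ω ∧ X ω ≤ y}.Finite := by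
    intro x y
    set ε := Real.exp (min (x * C) (y * C) - ψ C) with hεdef
    have hεpos : 0 < ε := Real.exp_pos _
    have hev : ∀ᶠ ω in Filter.cofinite, Real.exp (X ω * C - ψ C) < ε :=
      hpsumm.tendsto_cofinite_zero.eventually (eventually_lt_nhds hεpos)
    refine (Filter.eventually_cofinite.mp hev).subset ?_
    intro ω hω
    simp only [Set.mem_setOf_eq, not_lt]
    have hle : min (x * C) (y * C) ≤ X ω * C := by
      rcases le_total 0 C with hc | hc
      · exact (min_le_left _ _).trans (mul_le_mul_of_nonneg_right hω.1.le hc)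
      · exact (min_le_right _ _).trans (mul_le_mul_of_nonpos_right hω.2 hc)
    exact Real.exp_le_exp.mpr (by linarith)
  obtain ⟨K, γ, hγ, hlev⟩ := exists_threshold hpsumm hp0 hpsum1 hα0 hα1 hloc
  have hp0' : ∀ ω : Ω, 0 ≤ Real.exp (X ω * C - ψ C) := fun ω => (hp0 ω).le
  -- power of φ at any parameter value v (with its own weight function)
  have hpow : ∀ v : ℝ, Summable (fun ω : Ω => Real.exp (X ω * v - ψ v)) →
      (∑' ω : Ω, (if X ω < K then (0:ℝ) else if X ω = K then γ else 1) *
        Real.exp (X ω * v - ψ v)) =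
      (∑' ω : Ω, (if K < X ω then Real.exp (X ω * v - ψ v) else 0)) +
        γ * (∑' ω : Ω, (if X ω = K then Real.exp (X ω * v - ψ v) else 0)) := by
    intro v hsv
    have hpos' : ∀ ω : Ω, 0 ≤ Real.exp (X ω * v - ψ v) := fun ω => (Real.exp_pos _).le
    rw [← tsum_mul_left,
      ← Summable.tsum_add (summable_ite_aux hsv hpos' _) ((summable_ite_aux hsv hpos' _).mul_left γ)]
    refine tsum_congr fun ω => ?_
    rcases lt_trichotomy (X ω) K with h | h | h
    · rw [if_pos h, if_neg (not_lt.mpr h.le), if_neg (ne_of_lt h)]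
      ring
    · rw [if_neg (not_lt.mpr h.ge), if_pos h, if_neg (not_lt.mpr h.le), if_pos h]
      ring
    · rw [if_neg (not_lt.mpr h.le), if_neg (ne_of_gt h), if_pos h,
        if_neg (ne_of_gt h)]
      ring
  have hlevelC : (∑' ω : Ω, (if X ω < K then (0:ℝ) else if X ω = K then γ else 1) *
      Real.exp (X ω * C - ψ C)) = α := by
    rw [hpow C hpsumm]; exact hlev
  refine ⟨K, γ, hγ, hlevelC, ?_⟩
  intro φ' hφ' hlevel' w hw hCw
  have hq0 : ∀ ω : Ω, 0 ≤ Real.exp (X ω * w - ψ w) := fun ω => (Real.exp_pos _).le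
  have hqsum1 : ∑' ω : Ω, Real.exp (X ω * w - ψ w) = 1 := hprob w hw
  have hqsumm : Summable (fun ω : Ω => Real.exp (X ω * w - ψ w)) := by
    by_contra h
    rw [tsum_eq_zero_of_not_summable h] at hqsum1
    norm_num at hqsum1
  set φ : Ω → ℝ := fun ω => if X ω < K then (0:ℝ) else if X ω = K then γ else 1 with hφdef
  have hφmem : ∀ ω, φ ω ∈ Set.Icc (0:ℝ) 1 := by
    intro ω
    simp only [hφdef]
    split
    · exact ⟨le_refl 0, zero_le_one⟩
    · split
      · exact ⟨hγ.1.le, hγ.2⟩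
      · exact ⟨zero_le_one, le_refl 1⟩
  set k := Real.exp (K * (w - C) + (ψ C - ψ w)) with hkdef
  have hkpos : 0 < k := Real.exp_pos _
  -- sign factorization
  have hfact : ∀ ω : Ω, Real.exp (X ω * w - ψ w) - k * Real.exp (X ω * C - ψ C) =
      Real.exp (ψ C - ψ w) * Real.exp (X ω * C - ψ C) *
        (Real.exp (X ω * (w - C)) - Real.exp (K * (w - C))) := by
    intro ω
    have e1 : Real.exp (X ω * w - ψ w) =
        Real.exp (ψ C - ψ w) * Real.exp (X ω * C - ψ C) * Real.exp (X ω * (w - C)) := by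
      rw [← Real.exp_add, ← Real.exp_add]
      congr 1
      ring
    have e2 : k * Real.exp (X ω * C - ψ C) =
        Real.exp (ψ C - ψ w) * Real.exp (X ω * C - ψ C) * Real.exp (K * (w - C)) := by
      rw [hkdef, ← Real.exp_add, ← Real.exp_add, ← Real.exp_add]
      congr 1
      ring
    rw [e1, e2]
    ring
  have hkey : ∀ ω : Ω, 0 ≤ (φ ω - φ' ω) *
      (Real.exp (X ω * w - ψ w) - k * Real.exp (X ω * C - ψ C)) := by
    intro ω
    have hpos1 : 0 < Real.exp (ψ C - ψ w) * Real.exp (X ω * C - ψ C) :=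
      mul_pos (Real.exp_pos _) (Real.exp_pos _)
    rcases lt_trichotomy (X ω) K with h | h | h
    · have hφ0 : φ ω = 0 := by simp only [hφdef]; rw [if_pos h]
      have hneg : Real.exp (X ω * (w - C)) - Real.exp (K * (w - C)) < 0 := by
        rw [sub_neg]
        exact Real.exp_lt_exp.mpr (mul_lt_mul_of_pos_right h (by linarith))
      have h1 : φ ω - φ' ω ≤ 0 := by rw [hφ0]; linarith [(hφ' ω).1]
      have h2 : Real.exp (X ω * w - ψ w) - k * Real.exp (X ω * C - ψ C) ≤ 0 := by
        rw [hfact ω]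
        exact mul_nonpos_of_nonneg_of_nonpos hpos1.le hneg.le
      nlinarith
    · have : Real.exp (X ω * w - ψ w) - k * Real.exp (X ω * C - ψ C) = 0 := by
        rw [hfact ω, h]; ring
      rw [this, mul_zero]
    · have hφ1 : φ ω = 1 := by
        simp only [hφdef]
        rw [if_neg (not_lt.mpr h.le), if_neg (ne_of_gt h)]
      have hnn : 0 ≤ Real.exp (X ω * (w - C)) - Real.exp (K * (w - C)) := by
        rw [sub_nonneg]
        exact Real.exp_le_exp.mpr (mul_le_mul_of_nonneg_right h.le (by linarith))
      refine mul_nonneg ?_ ?_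
      · rw [hφ1]; linarith [(hφ' ω).2]
      · rw [hfact ω]
        exact mul_nonneg hpos1.le hnn
  -- summabilities
  have sφq : Summable (fun ω : Ω => φ ω * Real.exp (X ω * w - ψ w)) :=
    Summable.of_nonneg_of_le (fun ω => mul_nonneg (hφmem ω).1 (hq0 ω))
      (fun ω => by nlinarith [(hφmem ω).2, hq0 ω]) hqsumm
  have sφ'q : Summable (fun ω : Ω => φ' ω * Real.exp (X ω * w - ψ w)) :=
    Summable.of_nonneg_of_le (fun ω => mul_nonneg (hφ' ω).1 (hq0 ω))
      (fun ω => by nlinarith [(hφ' ω).2, hq0 ω]) hqsumm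
  have sφp : Summable (fun ω : Ω => φ ω * Real.exp (X ω * C - ψ C)) :=
    Summable.of_nonneg_of_le (fun ω => mul_nonneg (hφmem ω).1 (hp0' ω))
      (fun ω => by nlinarith [(hφmem ω).2, hp0' ω]) hpsumm
  have sφ'p : Summable (fun ω : Ω => φ' ω * Real.exp (X ω * C - ψ C)) :=
    Summable.of_nonneg_of_le (fun ω => mul_nonneg (hφ' ω).1 (hp0' ω))
      (fun ω => by nlinarith [(hφ' ω).2, hp0' ω]) hpsumm
  have hexpand : (∑' ω : Ω, (φ ω - φ' ω) *
      (Real.exp (X ω * w - ψ w) - k * Real.exp (X ω * C - ψ C))) =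
      ((∑' ω : Ω, φ ω * Real.exp (X ω * w - ψ w)) -
        (∑' ω : Ω, φ' ω * Real.exp (X ω * w - ψ w))) -
      k * ((∑' ω : Ω, φ ω * Real.exp (X ω * C - ψ C)) -
        (∑' ω : Ω, φ' ω * Real.exp (X ω * C - ψ C))) := by
    have heq : ∀ ω : Ω, (φ ω - φ' ω) *
        (Real.exp (X ω * w - ψ w) - k * Real.exp (X ω * C - ψ C)) =
        (φ ω * Real.exp (X ω * w - ψ w) - φ' ω * Real.exp (X ω * w - ψ w)) -
        (k * (φ ω * Real.exp (X ω * C - ψ C)) - k * (φ' ω * Real.exp (X ω * C - ψ C))) := by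
      intro ω; ring
    rw [tsum_congr heq, Summable.tsum_sub (sφq.sub sφ'q) ((sφp.mul_left k).sub (sφ'p.mul_left k)),
      Summable.tsum_sub sφq sφ'q, Summable.tsum_sub (sφp.mul_left k) (sφ'p.mul_left k),
      tsum_mul_left, tsum_mul_left]
    ring
  have h0 : 0 ≤ (∑' ω : Ω, (φ ω - φ' ω) *
      (Real.exp (X ω * w - ψ w) - k * Real.exp (X ω * C - ψ C))) :=
    tsum_nonneg hkey
  have hφ'C : (∑' ω : Ω, φ' ω * Real.exp (X ω * C - ψ C)) ≤ α := hlevel' C hC (le_refl C)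
  have hφC : (∑' ω : Ω, φ ω * Real.exp (X ω * C - ψ C)) = α := hlevelC
  rw [hexpand] at h0
  have hk2 : 0 ≤ k * ((∑' ω : Ω, φ ω * Real.exp (X ω * C - ψ C)) -
      (∑' ω : Ω, φ' ω * Real.exp (X ω * C - ψ C))) := by
    apply mul_nonneg hkpos.le
    rw [hφC]; linarith
  linarith
end
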